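/- Let K ≥ 2 and let η : {1,…,K} × {1,…,K} → (0,∞) satisfy: for every L ≥ 1 and all j_1,…,j_L ∈ {1,…,K}, the cyclic product η_{j_1→j_2} ⋯ η_{j_L→j_1} ≥ 1. Fix k ∈ {1,…,K}, set edge weights w(j,ℓ) = log η_{j→ℓ}, let m(ℓ) = min(ℓ→k) be the minimum weight over simple walks from ℓ to k (with m(k) = 0), and define θ* ∈ Δ by θ*_ℓ = exp(−m(ℓ)) / Σ_{ℓ'=1}^K exp(−m(ℓ')). Then θ* maximizes the k-th coordinate over the feasible polytope: for every θ' ∈ Δ satisfying θ'_i ≤ η_{j→i} · θ'_j for all i, j ∈ {1,…,K}, one has θ'_k ≤ θ*_k. -/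

import Mathlib

noncomputable section

/-- The weight of the walk `j 0, j 1, …, j m` for edge weights `w`. -/
def walkWeight (K : ℕ) (w : Fin K → Fin K → ℝ) (m : ℕ) (j : Fin (m + 1) → Fin K) : ℝ :=
  ∑ i : Fin m, w (j i.castSucc) (j i.succ)

/-- The minimum weight over simple walks (pairwise distinct vertices) from `a` to `b`. -/
def minWalk (K : ℕ) (w : Fin K → Fin K → ℝ) (a b : Fin K) : ℝ :=
  sInf {v : ℝ | ∃ (m : ℕ) (j : Fin (m + 1) → Fin K),
    j 0 = a ∧ j (Fin.last m) = b ∧ Function.Injective j ∧ v = walkWeight K w m j}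

theorem stmt14 (K : ℕ) (hK : 2 ≤ K) (η : Fin K → Fin K → ℝ)
    (hpos : ∀ k ℓ, 0 < η k ℓ)
    (hcyc : ∀ (L : ℕ) (j : Fin (L + 1) → Fin K),
      1 ≤ ∏ i : Fin (L + 1), η (j i) (j (i + 1)))
    (k : Fin K) (m : Fin K → ℝ)
    (hm : ∀ ℓ, m ℓ = minWalk K (fun a b => Real.log (η a b)) ℓ k)
    (θ : Fin K → ℝ)
    (hθ : ∀ ℓ, θ ℓ = Real.exp (-(m ℓ)) / ∑ ℓ' : Fin K, Real.exp (-(m ℓ'))) :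
    ∀ θ' ∈ stdSimplex ℝ (Fin K), (∀ i j, θ' i ≤ η j i * θ' j) → θ' k ≤ θ k := by
  haveI : NeZero K := ⟨by omega⟩
  set w : Fin K → Fin K → ℝ := fun a b => Real.log (η a b) with hw
  intro θ' hθ' hfeas
  have hθ'nonneg : ∀ i, 0 ≤ θ' i := hθ'.1
  have hθ'sum : ∑ i, θ' i = 1 := hθ'.2
  -- chaining the constraints along any walk
  have chain : ∀ (n : ℕ) (j : Fin (n + 1) → Fin K),
      θ' (j (Fin.last n)) ≤ Real.exp (walkWeight K w n j) * θ' (j 0) := by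
    intro n
    induction n with
    | zero =>
      intro j
      simp [walkWeight, Fin.last]
    | succ n ih =>
      intro j
      have h1 := ih (fun i => j i.castSucc)
      have h2 := hfeas (j (Fin.last (n + 1))) (j ((Fin.last n).castSucc))
      have hsplit : walkWeight K w (n + 1) j
          = walkWeight K w n (fun i => j i.castSucc)
            + w (j ((Fin.last n).castSucc)) (j (Fin.last (n + 1))) := by
        simp [walkWeight, Fin.sum_univ_castSucc, Fin.succ_last]
      have hηexp : η (j ((Fin.last n).castSucc)) (j (Fin.last (n + 1)))
          = Real.exp (w (j ((Fin.last n).castSucc)) (j (Fin.last (n + 1)))) := by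
        rw [hw]; rw [Real.exp_log (hpos _ _)]
      simp only [Fin.castSucc_zero] at h1
      calc θ' (j (Fin.last (n + 1)))
          ≤ η (j ((Fin.last n).castSucc)) (j (Fin.last (n + 1)))
              * θ' (j ((Fin.last n).castSucc)) := h2
        _ ≤ η (j ((Fin.last n).castSucc)) (j (Fin.last (n + 1)))
              * (Real.exp (walkWeight K w n (fun i => j i.castSucc)) * θ' (j 0)) :=
            mul_le_mul_of_nonneg_left h1 (le_of_lt (hpos _ _))
        _ = Real.exp (walkWeight K w (n + 1) j) * θ' (j 0) := by
            rw [hsplit, Real.exp_add, hηexp]; ring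
  have hSpos : 0 < ∑ ℓ' : Fin K, Real.exp (-(m ℓ')) :=
    Finset.sum_pos (fun i _ => Real.exp_pos _) Finset.univ_nonempty
  -- m k = 0
  have hmk : m k = 0 := by
    rw [hm]
    have hset : {v : ℝ | ∃ (n : ℕ) (j : Fin (n + 1) → Fin K),
        j 0 = k ∧ j (Fin.last n) = k ∧ Function.Injective j ∧ v = walkWeight K w n j}
        = {(0 : ℝ)} := by
      ext v
      constructor
      · rintro ⟨n, j, h0, hl, hinj, hv⟩
        have heq : (0 : Fin (n + 1)) = Fin.last n := hinj (h0.trans hl.symm)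
        have hn : n = 0 := by
          have := congrArg Fin.val heq
          simp [Fin.last] at this
          omega
        subst hn
        simp [walkWeight] at hv
        simpa using hv
      · rintro rfl
        exact ⟨0, fun _ => k, rfl, rfl, by intro a b _; fin_cases a; fin_cases b; rfl,
          by simp [walkWeight]⟩
    unfold minWalk
    rw [hset, csInf_singleton]
  -- main case split
  rcases le_or_gt (θ' k) 0 with hk0 | hk
  · have : 0 < θ k := by
      rw [hθ k]
      positivity
    linarith
  -- θ' k > 0 : per-coordinate lower bound
  have key : ∀ ℓ, Real.exp (-(m ℓ)) * θ' k ≤ θ' ℓ := by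
    intro ℓ
    have hne : ∃ v, v ∈ {v : ℝ | ∃ (n : ℕ) (j : Fin (n + 1) → Fin K),
        j 0 = ℓ ∧ j (Fin.last n) = k ∧ Function.Injective j ∧ v = walkWeight K w n j} := by
      by_cases h : ℓ = k
      · subst h
        exact ⟨0, 0, fun _ => ℓ, rfl, rfl, by intro a b _; fin_cases a; fin_cases b; rfl, by
          simp [walkWeight]⟩
      · refine ⟨walkWeight K w 1 (fun i => if i = 0 then ℓ else k), 1,
          fun i => if i = 0 then ℓ else k, by simp, by simp [Fin.last], ?_, rfl⟩
        intro a b hab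
        fin_cases a <;> fin_cases b <;> simp_all
    have hposℓ : 0 < θ' ℓ := by
      obtain ⟨v, n, j, h0, hl, hinj, hv⟩ := hne
      have hc := chain n j
      rw [h0, hl] at hc
      nlinarith [Real.exp_pos (walkWeight K w n j), hθ'nonneg ℓ]
    have hlb : ∀ v ∈ {v : ℝ | ∃ (n : ℕ) (j : Fin (n + 1) → Fin K),
        j 0 = ℓ ∧ j (Fin.last n) = k ∧ Function.Injective j ∧ v = walkWeight K w n j},
        Real.log (θ' k) - Real.log (θ' ℓ) ≤ v := by
      rintro v ⟨n, j, h0, hl, hinj, rfl⟩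
      have hc := chain n j
      rw [h0, hl] at hc
      have hlog : Real.log (θ' k) ≤ Real.log (Real.exp (walkWeight K w n j) * θ' ℓ) :=
        Real.log_le_log hk hc
      rw [Real.log_mul (Real.exp_ne_zero _) (ne_of_gt hposℓ), Real.log_exp] at hlog
      linarith
    have hinf : Real.log (θ' k) - Real.log (θ' ℓ) ≤ m ℓ := by
      rw [hm]
      exact le_csInf hne hlb
    have h1 : Real.exp (-(m ℓ)) ≤ Real.exp (Real.log (θ' ℓ) - Real.log (θ' k)) :=
      Real.exp_le_exp.mpr (by linarith)
    rw [Real.exp_sub, Real.exp_log hposℓ, Real.exp_log hk] at h1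
    calc Real.exp (-(m ℓ)) * θ' k ≤ (θ' ℓ / θ' k) * θ' k :=
          mul_le_mul_of_nonneg_right h1 (le_of_lt hk)
      _ = θ' ℓ := by field_simp
  have hsum : (∑ ℓ' : Fin K, Real.exp (-(m ℓ'))) * θ' k ≤ 1 := by
    rw [Finset.sum_mul]
    calc ∑ ℓ' : Fin K, Real.exp (-(m ℓ')) * θ' k ≤ ∑ ℓ' : Fin K, θ' ℓ' :=
          Finset.sum_le_sum (fun i _ => key i)
      _ = 1 := hθ'sum
  rw [hθ k, hmk]
  simp only [neg_zero, Real.exp_zero]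
  rw [le_div_iff₀ hSpos]
  linarith [mul_comm (θ' k) (∑ ℓ' : Fin K, Real.exp (-(m ℓ')))]
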